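/- Let U be a Ptolemy diagram of the ∞-gon P_∞ and D ⊆ I(U) a subset which is locally finite or has a fountain. Then every arc of U which is not in D lies in the interior of some (finite or infinite) D-cell; that is, U is divided into D-cells by the arcs in D. -/

import Mathlib

namespace InfinityGonPtolemy

/-- `{a,b}` (with `a < b`) is an arc of the ∞-gon. -/
def IsArc (a b : ℤ) : Prop := a + 2 ≤ b

/-- `{a,b}` (with `a < b`) is an edge of the ∞-gon. -/
def IsEdge (a b : ℤ) : Prop := b = a + 1

/-- Two arcs, given as ordered pairs, cross each other. -/
def Cross (p q : ℤ × ℤ) : Prop :=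
  (p.1 < q.1 ∧ q.1 < p.2 ∧ p.2 < q.2) ∨ (q.1 < p.1 ∧ p.1 < q.2 ∧ q.2 < p.2)

/-- `n` is a left fountain of `A`. -/
def IsLeftFountain (A : Set (ℤ × ℤ)) (n : ℤ) : Prop :=
  {m : ℤ | (m, n) ∈ A}.Infinite

/-- `n` is a right fountain of `A`. -/
def IsRightFountain (A : Set (ℤ × ℤ)) (n : ℤ) : Prop :=
  {p : ℤ | (n, p) ∈ A}.Infinite

/-- `A` has a fountain. -/
def HasFountain (A : Set (ℤ × ℤ)) : Prop :=
  ∃ n : ℤ, IsLeftFountain A n ∧ IsRightFountain A n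

/-- `A` is locally finite: only finitely many arcs of `A` end in any given integer. -/
def LocallyFinite (A : Set (ℤ × ℤ)) : Prop :=
  ∀ n : ℤ, {m : ℤ | (m, n) ∈ A ∨ (n, m) ∈ A}.Finite

/-- `U` is a Ptolemy diagram of the ∞-gon: (i) whenever two arcs `{a,c}` and `{b,d}` of
`U` cross, those of `{a,b}`, `{b,c}`, `{c,d}`, `{a,d}` which are arcs belong to `U`;
(ii) every right fountain of `U` is a fountain. -/
def IsPtolemy (U : Set (ℤ × ℤ)) : Prop :=
  (∀ p ∈ U, IsArc p.1 p.2) ∧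
  (∀ a b c d : ℤ, (a, c) ∈ U → (b, d) ∈ U → a < b → b < c → c < d →
    (IsArc a b → (a, b) ∈ U) ∧ (IsArc b c → (b, c) ∈ U) ∧
    (IsArc c d → (c, d) ∈ U) ∧ (IsArc a d → (a, d) ∈ U)) ∧
  (∀ n : ℤ, IsRightFountain U n → IsLeftFountain U n)

/-- `I(U)`: the arcs of `U` crossing no arc of `U`. -/
def core (U : Set (ℤ × ℤ)) : Set (ℤ × ℤ) :=
  {p | p ∈ U ∧ ∀ q ∈ U, ¬ Cross p q}

/-- `{a,b}` (with `a < b`, both in `S`) is a boundary pair of the finite cell `S`: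
either `a` and `b` are consecutive in `S`, or `a = min S` and `b = max S`. -/
def CellBoundaryPair (S : Finset ℤ) (a b : ℤ) : Prop :=
  a ∈ S ∧ b ∈ S ∧ a < b ∧
    ((∀ c ∈ S, ¬(a < c ∧ c < b)) ∨ (∀ c ∈ S, a ≤ c ∧ c ≤ b))

/-- `S` is a finite `D`-cell. -/
def IsFiniteCell (D : Set (ℤ × ℤ)) (S : Finset ℤ) : Prop :=
  S.Nonempty ∧
  (∀ a b : ℤ, CellBoundaryPair S a b → (IsEdge a b ∨ (a, b) ∈ D)) ∧
  (∀ a ∈ S, ∀ b ∈ S, a < b → ¬ CellBoundaryPair S a b → (a, b) ∉ D)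

/-- `{a,b}` lies in the interior of the finite cell `S`. -/
def FiniteInterior (S : Finset ℤ) (a b : ℤ) : Prop :=
  a ∈ S ∧ b ∈ S ∧ a < b ∧ ¬ CellBoundaryPair S a b

/-- The strictly increasing enumeration `f` is an infinite `D`-cell: consecutive pairs
are edges or elements of `D`, and no other pair of its vertices belongs to `D`. -/
def IsInfiniteCell (D : Set (ℤ × ℤ)) (f : ℤ → ℤ) : Prop :=
  StrictMono f ∧
  (∀ t : ℤ, IsEdge (f t) (f (t + 1)) ∨ (f t, f (t + 1)) ∈ D) ∧
  (∀ k l : ℤ, k + 2 ≤ l → (f k, f l) ∉ D)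

/-- `{a,b}` lies in the interior of the infinite cell `f`. -/
def InfiniteInterior (f : ℤ → ℤ) (a b : ℤ) : Prop :=
  ∃ k l : ℤ, k + 2 ≤ l ∧ a = f k ∧ b = f l

/-! ### Auxiliary machinery for the proof -/

/-- The arc `q` lies (weakly) above the arc `{a,b}`. -/
def Under (a b : ℤ) (q : ℤ × ℤ) : Prop := q.1 ≤ a ∧ b ≤ q.2

/-- The arc `q` separates the vertex `v` from the arc `{a,b}`. -/
def Sep (a b : ℤ) (q : ℤ × ℤ) (v : ℤ) : Prop :=
  (Under a b q ∧ (v < q.1 ∨ q.2 < v)) ∨ (¬ Under a b q ∧ q.1 < v ∧ v < q.2)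

/-- `v` is a vertex of the cell of the arc `{a,b}`: no arc of `D` separates it. -/
def Good (D : Set (ℤ × ℤ)) (a b v : ℤ) : Prop := ∀ q ∈ D, ¬ Sep a b q v

/-- The standing hypotheses: `{a,b}` is an arc not in `D`, arcs of `D` are genuine arcs,
pairwise noncrossing, and noncrossing with `{a,b}`. -/
structure Ctx (D : Set (ℤ × ℤ)) (a b : ℤ) : Prop where
  hab : a + 2 ≤ b
  hnab : (a, b) ∉ D
  harc : ∀ q ∈ D, q.1 + 2 ≤ q.2
  hnc : ∀ q ∈ D, ∀ r ∈ D, ¬ Cross q r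
  hncab : ∀ q ∈ D, ¬ Cross q (a, b)

namespace Ctx

variable {D : Set (ℤ × ℤ)} {a b : ℤ}

theorem tri (h : Ctx D a b) {q : ℤ × ℤ} (hq : q ∈ D) :
    (q.1 ≤ a ∧ b ≤ q.2) ∨ (a ≤ q.1 ∧ q.2 ≤ b) ∨ q.2 ≤ a ∨ b ≤ q.1 := by
  have h1 := h.hncab q hq
  have h2 := h.harc q hq
  have h3 := h.hab
  simp only [Cross] at h1
  omega

theorem good_bounds {u : ℤ} (hu : Good D a b u) {q : ℤ × ℤ} (hq : q ∈ D) :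
    (Under a b q → q.1 ≤ u ∧ u ≤ q.2) ∧ (¬ Under a b q → u ≤ q.1 ∨ q.2 ≤ u) := by
  have h := hu q hq
  unfold Sep at h
  constructor
  · intro hU; by_contra hc; exact h (Or.inl ⟨hU, by omega⟩)
  · intro hU; by_contra hc; exact h (Or.inr ⟨hU, by omega⟩)

theorem good_a (h : Ctx D a b) : Good D a b a := by
  intro q hq hsep
  have ht := h.tri hq
  have hb := h.hab
  rcases hsep with ⟨hU, hs⟩ | ⟨hU, hs⟩
  · obtain ⟨u1, u2⟩ := hU; omega
  · simp only [Under] at hU; omega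

theorem good_b (h : Ctx D a b) : Good D a b b := by
  intro q hq hsep
  have ht := h.tri hq
  have hb := h.hab
  rcases hsep with ⟨hU, hs⟩ | ⟨hU, hs⟩
  · obtain ⟨u1, u2⟩ := hU; omega
  · simp only [Under] at hU; omega

/-- Between any two cell-vertices `u < v` with `{u,v}` an arc not in `D` there is a
further cell vertex. -/
theorem between (h : Ctx D a b) {u v : ℤ} (hu : Good D a b u) (hv : Good D a b v)
    (huv : u + 2 ≤ v) (hne : (u, v) ∉ D) : ∃ w, Good D a b w ∧ u < w ∧ w < v := by
  classical
  set Ws : Finset ℤ := insert (u + 1) ((Finset.Ioo u v).filter (fun d => (u, d) ∈ D))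
    with hWs
  have hne' : Ws.Nonempty := ⟨u + 1, Finset.mem_insert_self _ _⟩
  set w := Ws.max' hne' with hw
  have hwmem := Ws.max'_mem hne'
  have hmem : ∀ x ∈ Ws, u < x ∧ x < v := by
    intro x hx
    rcases Finset.mem_insert.1 hx with rfl | hx
    · omega
    · have := (Finset.mem_filter.1 hx).1
      rw [Finset.mem_Ioo] at this
      omega
  have hwb := hmem w hwmem
  refine ⟨w, ?_, hwb.1, hwb.2⟩
  intro q hq hsep
  rcases hsep with ⟨hU, hs⟩ | ⟨hU, h1, h2⟩
  · have b1 := (good_bounds hu hq).1 hU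
    have b2 := (good_bounds hv hq).1 hU
    omega
  · have b1 := (good_bounds hu hq).2 hU
    have b2 := (good_bounds hv hq).2 hU
    have hq1 : u ≤ q.1 := by omega
    have hq2 : q.2 ≤ v := by omega
    rcases eq_or_lt_of_le hq1 with he | hlt
    · -- q = (u, q.2)
      have hqq : q = (u, q.2) := by rw [he]
      have hq2v : q.2 ≠ v := by
        intro hvv
        apply hne; rw [hvv] at hqq; rw [← hqq]; exact hq
      have harc := h.harc q hq
      have : q.2 ∈ Ws := by
        apply Finset.mem_insert_of_mem
        rw [Finset.mem_filter, Finset.mem_Ioo]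
        exact ⟨⟨by omega, by omega⟩, by rw [← hqq]; exact hq⟩
      have := Finset.le_max' _ _ this
      omega
    · -- u < q.1, so w ≠ u+1 and (u,w) ∈ D
      have hwD : (u, w) ∈ D := by
        rcases Finset.mem_insert.1 hwmem with he | hmemf
        · omega
        · exact (Finset.mem_filter.1 hmemf).2
      exact h.hnc (u, w) hwD q hq (Or.inl ⟨hlt, by omega, by omega⟩)

/-- Case 1: some arc of `D` lies above `{a,b}`; then we get a finite cell. -/
theorem caseUnder (h : Ctx D a b) (hex : ∃ q ∈ D, Under a b q) :
    ∃ S : Finset ℤ, IsFiniteCell D S ∧ FiniteInterior S a b := by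
  classical
  obtain ⟨q₀, hq₀D, hq₀U⟩ := hex
  -- total order by inclusion on Under arcs
  have tot : ∀ q ∈ D, ∀ q' ∈ D, Under a b q → Under a b q' →
      (q.1 ≤ q'.1 ∧ q'.2 ≤ q.2) ∨ (q'.1 ≤ q.1 ∧ q.2 ≤ q'.2) := by
    intro q hq q' hq' hU hU'
    have := h.hnc q hq q' hq'
    obtain ⟨u1, u2⟩ := hU; obtain ⟨u1', u2'⟩ := hU'
    have := h.hab
    simp only [Cross] at *
    omega
  -- minimal Under arc
  set Box : Finset (ℤ × ℤ) :=
    ((Finset.Icc q₀.1 a) ×ˢ (Finset.Icc b q₀.2)).filter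
      (fun q => q ∈ D ∧ Under a b q) with hBox
  have hq₀Box : q₀ ∈ Box := by
    rw [hBox, Finset.mem_filter, Finset.mem_product, Finset.mem_Icc, Finset.mem_Icc]
    exact ⟨⟨⟨le_refl _, hq₀U.1⟩, ⟨hq₀U.2, le_refl _⟩⟩, hq₀D, hq₀U⟩
  obtain ⟨qs, hqsBox, hqsmin⟩ := Finset.exists_min_image Box (fun q => q.2 - q.1)
    ⟨q₀, hq₀Box⟩
  rw [hBox, Finset.mem_filter] at hqsBox
  obtain ⟨hqsbox, hqsD, hqsU⟩ := hqsBox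
  rw [Finset.mem_product, Finset.mem_Icc, Finset.mem_Icc] at hqsbox
  have hmin : ∀ q ∈ D, Under a b q → q.1 ≤ qs.1 ∧ qs.2 ≤ q.2 := by
    intro q hq hU
    rcases tot q hq q₀ hq₀D hU hq₀U with ht | ht
    · omega
    · have hqBox : q ∈ Box := by
        rw [hBox, Finset.mem_filter, Finset.mem_product, Finset.mem_Icc, Finset.mem_Icc]
        exact ⟨⟨⟨ht.1, hU.1⟩, ⟨hU.2, ht.2⟩⟩, hq, hU⟩
      have hwid := hqsmin q hqBox
      rcases tot q hq qs hqsD hU hqsU with ht' | ht'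
      · exact ht'
      · omega
  -- endpoints of the minimal Under arc are Good
  have goodc : Good D a b qs.1 := by
    intro q hq hsep
    rcases hsep with ⟨hU, hs⟩ | ⟨hU, h1, h2⟩
    · have := hmin q hq hU
      obtain ⟨u1, u2⟩ := hU; obtain ⟨s1, s2⟩ := hqsU
      have := h.hab; omega
    · rcases h.tri hq with ht | ht | ht | ht
      · exact hU ht
      · obtain ⟨s1, s2⟩ := hqsU; have := h.hab; omega
      · exact h.hnc q hq qs hqsD
          (Or.inl ⟨h1, h2, by obtain ⟨s1, s2⟩ := hqsU; have := h.hab; omega⟩)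
      · obtain ⟨s1, s2⟩ := hqsU; have := h.hab; omega
  have goodd : Good D a b qs.2 := by
    intro q hq hsep
    rcases hsep with ⟨hU, hs⟩ | ⟨hU, h1, h2⟩
    · have := hmin q hq hU
      obtain ⟨u1, u2⟩ := hU; obtain ⟨s1, s2⟩ := hqsU
      have := h.hab; omega
    · rcases h.tri hq with ht | ht | ht | ht
      · exact hU ht
      · obtain ⟨s1, s2⟩ := hqsU; have := h.hab; omega
      · obtain ⟨s1, s2⟩ := hqsU; have := h.hab; omega
      · exact h.hnc qs hqsD q hq
          (Or.inl ⟨by obtain ⟨s1, s2⟩ := hqsU; have := h.hab; omega, h1, h2⟩)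
  have bound : ∀ v : ℤ, Good D a b v → qs.1 ≤ v ∧ v ≤ qs.2 := by
    intro v hv; exact (good_bounds hv hqsD).1 hqsU
  -- the finite cell
  set S : Finset ℤ := (Finset.Icc qs.1 qs.2).filter (fun v => Good D a b v) with hS
  have hmemS : ∀ v : ℤ, v ∈ S ↔ Good D a b v := by
    intro v
    rw [hS, Finset.mem_filter, Finset.mem_Icc]
    exact ⟨fun hx => hx.2, fun hx => ⟨bound v hx, hx⟩⟩
  have haS : a ∈ S := (hmemS a).2 (good_a h)
  have hbS : b ∈ S := (hmemS b).2 (good_b h)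
  have hcS : qs.1 ∈ S := (hmemS _).2 goodc
  have hdS : qs.2 ∈ S := (hmemS _).2 goodd
  have hqs_ne : qs ≠ (a, b) := by intro he; exact h.hnab (he ▸ hqsD)
  have hqs_lt : qs.1 < a ∨ b < qs.2 := by
    obtain ⟨s1, s2⟩ := hqsU
    rcases eq_or_lt_of_le s1 with h1 | h1
    · rcases eq_or_lt_of_le s2 with h2 | h2
      · exfalso; exact hqs_ne (Prod.ext h1 h2.symm)
      · exact Or.inr h2
    · exact Or.inl h1
  refine ⟨S, ⟨⟨a, haS⟩, ?_, ?_⟩, haS, hbS, by have := h.hab; omega, ?_⟩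
  · -- boundary pairs are edges or in D
    rintro x y ⟨hxS, hyS, hxy, hdisj⟩
    by_cases hxyD : (x, y) ∈ D
    · exact Or.inr hxyD
    by_cases hedge : y = x + 1
    · exact Or.inl hedge
    exfalso
    have hx2 : x + 2 ≤ y := by omega
    obtain ⟨w, hwG, hw1, hw2⟩ := h.between ((hmemS x).1 hxS) ((hmemS y).1 hyS) hx2 hxyD
    rcases hdisj with hd | hd
    · exact hd w ((hmemS w).2 hwG) ⟨hw1, hw2⟩
    · have h1 := hd qs.1 hcS
      have h2 := hd qs.2 hdS
      have h3 := bound x ((hmemS x).1 hxS)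
      have h4 := bound y ((hmemS y).1 hyS)
      have hx' : x = qs.1 := by omega
      have hy' : y = qs.2 := by omega
      apply hxyD
      rw [hx', hy']
      exact (Prod.mk.eta (p := qs)) ▸ hqsD
  · -- non-boundary pairs are not in D
    intro x hxS y hyS hxy hnb hxyD
    apply hnb
    refine ⟨hxS, hyS, hxy, ?_⟩
    by_cases hU : Under a b (x, y)
    · right
      intro c hcS'
      have := (good_bounds ((hmemS c).1 hcS') hxyD).1 hU
      simpa using this
    · left
      intro c hcS' ⟨hc1, hc2⟩
      exact ((hmemS c).1 hcS') (x, y) hxyD (Or.inr ⟨hU, hc1, hc2⟩)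
  · -- (a,b) is not a boundary pair
    rintro ⟨-, -, -, hd | hd⟩
    · obtain ⟨w, hwG, hw1, hw2⟩ := h.between (good_a h) (good_b h) h.hab h.hnab
      exact hd w ((hmemS w).2 hwG) ⟨hw1, hw2⟩
    · rcases hqs_lt with hlt | hlt
      · have := hd qs.1 hcS; omega
      · have := hd qs.2 hdS; omega

/-- A fountain of `D` yields an arc of `D` above `{a,b}`. -/
theorem fountain_under (h : Ctx D a b) (hf : HasFountain D) :
    ∃ q ∈ D, Under a b q := by
  obtain ⟨n, hl, hr⟩ := hf
  have hlbd : ∀ x ∈ {m : ℤ | (m, n) ∈ D}, x ≤ n - 2 := by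
    intro x hx; have := h.harc (x, n) hx; simpa using by omega
  have hrbd : ∀ x ∈ {p : ℤ | (n, p) ∈ D}, n + 2 ≤ x := by
    intro x hx; have := h.harc (n, x) hx; simpa using by omega
  have hlsmall : ∀ K : ℤ, ∃ m ∈ {m : ℤ | (m, n) ∈ D}, m < K := by
    intro K
    by_contra hc
    push_neg at hc
    exact hl ((Set.finite_Icc K (n - 2)).subset fun x hx => by
      rw [Set.mem_Icc]; exact ⟨hc x hx, hlbd x hx⟩)
  have hrbig : ∀ K : ℤ, ∃ p ∈ {p : ℤ | (n, p) ∈ D}, K < p := by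
    intro K
    by_contra hc
    push_neg at hc
    exact hr ((Set.finite_Icc (n + 2) K).subset fun x hx => by
      rw [Set.mem_Icc]; exact ⟨hrbd x hx, hc x hx⟩)
  rcases le_or_gt n a with hna | hna
  · obtain ⟨p, hpD, hp⟩ := hrbig (b - 1)
    exact ⟨(n, p), hpD, hna, by omega⟩
  rcases le_or_gt b n with hbn | hbn
  · obtain ⟨m, hmD, hm⟩ := hlsmall (a + 1)
    exact ⟨(m, n), hmD, by omega, hbn⟩
  · exfalso
    obtain ⟨p, hpD, hp⟩ := hrbig b
    exact h.hncab (n, p) hpD (Or.inr ⟨hna, hbn, hp⟩)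

/-- Case 2: no arc of `D` lies above `{a,b}` and `D` is locally finite; then we get an
infinite cell. -/
theorem caseNoUnder (h : Ctx D a b) (hnu : ∀ q ∈ D, ¬ Under a b q)
    (hLF : LocallyFinite D) :
    ∃ f : ℤ → ℤ, IsInfiniteCell D f ∧ InfiniteInterior f a b := by
  classical
  have hfinR : ∀ u : ℤ, {d : ℤ | (u, d) ∈ D}.Finite :=
    fun u => (hLF u).subset fun d hd => Or.inr hd
  have hfinL : ∀ u : ℤ, {c : ℤ | (c, u) ∈ D}.Finite :=
    fun u => (hLF u).subset fun c hc => Or.inl hc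
  set next : ℤ → ℤ := fun u =>
    (insert (u + 1) (hfinR u).toFinset).max' ⟨u + 1, Finset.mem_insert_self _ _⟩
    with hnextdef
  set prev : ℤ → ℤ := fun u =>
    (insert (u - 1) (hfinL u).toFinset).min' ⟨u - 1, Finset.mem_insert_self _ _⟩
    with hprevdef
  have hnext_mem : ∀ u : ℤ, next u = u + 1 ∨ (u, next u) ∈ D := by
    intro u
    have hmm : next u ∈ insert (u + 1) (hfinR u).toFinset := by
      simp only [hnextdef]
      exact Finset.max'_mem _ _
    rcases Finset.mem_insert.1 hmm with he | hm
    · exact Or.inl he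
    · exact Or.inr ((hfinR u).mem_toFinset.1 hm)
  have hprev_mem : ∀ u : ℤ, prev u = u - 1 ∨ (prev u, u) ∈ D := by
    intro u
    have hmm : prev u ∈ insert (u - 1) (hfinL u).toFinset := by
      simp only [hprevdef]
      exact Finset.min'_mem _ _
    rcases Finset.mem_insert.1 hmm with he | hm
    · exact Or.inl he
    · exact Or.inr ((hfinL u).mem_toFinset.1 hm)
  have hnext_gt : ∀ u : ℤ, u < next u := by
    intro u
    have h1 : u + 1 ≤ next u := by
      simp only [hnextdef]
      exact Finset.le_max' _ _ (Finset.mem_insert_self _ _)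
    omega
  have hprev_lt : ∀ u : ℤ, prev u < u := by
    intro u
    have h1 : prev u ≤ u - 1 := by
      simp only [hprevdef]
      exact Finset.min'_le _ _ (Finset.mem_insert_self _ _)
    omega
  have hnext_ub : ∀ u d : ℤ, (u, d) ∈ D → d ≤ next u := by
    intro u d hd
    simp only [hnextdef]
    exact Finset.le_max' _ d (Finset.mem_insert_of_mem ((hfinR u).mem_toFinset.2 hd))
  have hprev_lb : ∀ u c : ℤ, (c, u) ∈ D → prev u ≤ c := by
    intro u c hc
    simp only [hprevdef]
    exact Finset.min'_le _ c (Finset.mem_insert_of_mem ((hfinL u).mem_toFinset.2 hc))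
  have hnext_good : ∀ u : ℤ, Good D a b u → Good D a b (next u) := by
    intro u hu q hq hsep
    rcases hsep with ⟨hU, -⟩ | ⟨-, h1, h2⟩
    · exact hnu q hq hU
    have hb := (good_bounds hu hq).2 (hnu q hq)
    have hq1 : u ≤ q.1 := by have := hnext_gt u; omega
    rcases eq_or_lt_of_le hq1 with he | hlt
    · have : q = (u, q.2) := by rw [he]
      have := hnext_ub u q.2 (this ▸ hq)
      omega
    · have hwD : (u, next u) ∈ D := by
        rcases hnext_mem u with he | hm
        · omega
        · exact hm
      exact h.hnc (u, next u) hwD q hq (Or.inl ⟨hlt, h1, h2⟩)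
  have hprev_good : ∀ u : ℤ, Good D a b u → Good D a b (prev u) := by
    intro u hu q hq hsep
    rcases hsep with ⟨hU, -⟩ | ⟨-, h1, h2⟩
    · exact hnu q hq hU
    have hb := (good_bounds hu hq).2 (hnu q hq)
    have hq2 : q.2 ≤ u := by have := hprev_lt u; omega
    rcases eq_or_lt_of_le hq2 with he | hlt
    · have : q = (q.1, u) := by rw [← he]
      have := hprev_lb u q.1 (this ▸ hq)
      omega
    · have hwD : (prev u, u) ∈ D := by
        rcases hprev_mem u with he | hm
        · omega
        · exact hm
      exact h.hnc q hq (prev u, u) hwD (Or.inl ⟨h1, h2, hlt⟩)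
  -- the enumeration
  set f : ℤ → ℤ := fun t => if 0 ≤ t then next^[t.toNat] a else prev^[(-t).toNat] a
    with hfdef
  have hf0 : f 0 = a := by simp [hfdef]
  have hfpos : ∀ t : ℤ, 0 ≤ t → f (t + 1) = next (f t) := by
    intro t ht
    have h1 : (t + 1).toNat = t.toNat + 1 := by omega
    simp only [hfdef, if_pos ht, if_pos (by omega : (0:ℤ) ≤ t + 1), h1,
      Function.iterate_succ_apply']
  have hfneg : ∀ t : ℤ, t < 0 → f t = prev (f (t + 1)) := by
    intro t ht
    have h1 : (-t).toNat = (-(t + 1)).toNat + 1 := by omega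
    by_cases ht1 : 0 ≤ t + 1
    · have ht1' : t + 1 = 0 := by omega
      simp only [hfdef, if_neg (by omega : ¬ (0:ℤ) ≤ t), if_pos ht1, h1,
        Function.iterate_succ_apply', ht1']
      simp
    · simp only [hfdef, if_neg (by omega : ¬ (0:ℤ) ≤ t), if_neg ht1, h1,
        Function.iterate_succ_apply']
  have hgn : ∀ n : ℕ, Good D a b (next^[n] a) := by
    intro n
    induction n with
    | zero => exact good_a h
    | succ n ih => rw [Function.iterate_succ_apply']; exact hnext_good _ ih
  have hgp : ∀ n : ℕ, Good D a b (prev^[n] a) := by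
    intro n
    induction n with
    | zero => exact good_a h
    | succ n ih => rw [Function.iterate_succ_apply']; exact hprev_good _ ih
  have hfGood : ∀ t : ℤ, Good D a b (f t) := by
    intro t
    by_cases ht : 0 ≤ t
    · simp only [hfdef, if_pos ht]; exact hgn _
    · simp only [hfdef, if_neg ht]; exact hgp _
  have hmono : StrictMono f := by
    apply strictMono_int_of_lt_succ
    intro t
    rcases le_or_gt 0 t with ht | ht
    · rw [hfpos t ht]; exact hnext_gt _
    · rw [hfneg t ht]; exact hprev_lt _
  refine ⟨f, ⟨hmono, ?_, ?_⟩, ?_⟩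
  · -- consecutive pairs
    intro t
    rcases le_or_gt 0 t with ht | ht
    · rw [hfpos t ht]
      rcases hnext_mem (f t) with he | hm
      · exact Or.inl he
      · exact Or.inr hm
    · rw [hfneg t ht]
      rcases hprev_mem (f (t + 1)) with he | hm
      · exact Or.inl (by rw [IsEdge]; omega)
      · exact Or.inr hm
  · -- non-consecutive pairs are not in D
    intro k l hkl hmem
    exact hfGood (k + 1) (f k, f l) hmem
      (Or.inr ⟨hnu _ hmem, hmono (by omega : k < k + 1), hmono (by omega : k + 1 < l)⟩)
  · -- (a,b) lies in the interior: next reaches b from a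
    have hstep : ∀ u : ℤ, u < b → next u ≤ b := by
      intro u hub
      rcases hnext_mem u with he | hm
      · omega
      · rcases h.tri hm with ht | ht | ht | ht
        · exact absurd ht (hnu _ hm)
        · exact ht.2
        · simp only at ht; have := h.hab; omega
        · simp only at ht; omega
    have hreach : ∀ m : ℕ, ∀ u : ℤ, Good D a b u → u ≤ b → b - u ≤ m →
        ∃ n : ℕ, next^[n] u = b := by
      intro m
      induction m with
      | zero =>
        intro u _ hub hm
        exact ⟨0, by simp; omega⟩
      | succ m ih =>
        intro u hu hub hm
        rcases eq_or_lt_of_le hub with he | hlt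
        · exact ⟨0, by simp [he]⟩
        · obtain ⟨n, hn⟩ := ih (next u) (hnext_good u hu) (hstep u hlt)
            (by have := hnext_gt u; omega)
          exact ⟨n + 1, by rw [Function.iterate_succ_apply]; exact hn⟩
    obtain ⟨n, hn⟩ := hreach (b - a).toNat a (good_a h) (by have := h.hab; omega)
      (by omega)
    have hn2 : 2 ≤ n := by
      by_contra hc
      interval_cases n
      · simp at hn; have := h.hab; omega
      · simp at hn
        rcases hnext_mem a with he | hm
        · have := h.hab; omega
        · rw [hn] at hm; exact h.hnab hm
    refine ⟨0, (n : ℤ), by omega, hf0.symm, ?_⟩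
    have : f (n : ℤ) = next^[n] a := by
      simp [hfdef, if_pos (by positivity : (0:ℤ) ≤ (n:ℤ))]
    rw [this, hn]

end Ctx

/-- if `U` is a Ptolemy diagram of the ∞-gon and `D ⊆ I(U)` is locally
finite or has a fountain, then every arc of `U` not in `D` lies in the interior of some
finite or infinite `D`-cell. -/
theorem stmt18 (U D : Set (ℤ × ℤ)) (hU : IsPtolemy U) (hD : D ⊆ core U)
    (hDf : LocallyFinite D ∨ HasFountain D) :
    ∀ p ∈ U, p ∉ D →
      (∃ S : Finset ℤ, IsFiniteCell D S ∧ FiniteInterior S p.1 p.2) ∨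
      (∃ f : ℤ → ℤ, IsInfiniteCell D f ∧ InfiniteInterior f p.1 p.2) := by
  intro p hp hpD
  obtain ⟨a, b⟩ := p
  have hab : a + 2 ≤ b := hU.1 _ hp
  have hctx : Ctx D a b :=
    { hab := hab
      hnab := hpD
      harc := fun q hq => hU.1 q (hD hq).1
      hnc := fun q hq r hr => (hD hq).2 r (hD hr).1
      hncab := fun q hq => (hD hq).2 (a, b) hp }
  by_cases hex : ∃ q ∈ D, Under a b q
  · exact Or.inl (hctx.caseUnder hex)
  · push_neg at hex
    have hLF : LocallyFinite D := by
      rcases hDf with hLF | hF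
      · exact hLF
      · exact absurd (hctx.fountain_under hF) (by push_neg; exact hex)
    exact Or.inr (hctx.caseNoUnder hex hLF)

end InfinityGonPtolemy
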